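/- For smooth functions λ_1(x), ..., λ_n(x), the derivative of the (n+2)-th power sum satisfies (1/(n+2)) ∂_x τ_{n+2} = Σ_{i=1}^n ((-1)^{n-i}/i)(σ_1 σ_{n-i+1} - σ_{n-i+2}) ∂_x τ_i, where σ_{n+1} := 0. -/

import Mathlib

open Finset

/-- The `k`-th elementary symmetric function of `l 1, …, l n`
(it vanishes for `k > n`). -/
def esymm (n : ℕ) (l : Fin n → ℝ) (k : ℕ) : ℝ :=
  ∑ s ∈ Finset.univ.powersetCard k, ∏ i ∈ s, l i

/-- For differentiable functions `λ_1(x), …, λ_n(x)` with power sums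
`τ_k = Σ_j λ_j^k` and elementary symmetric functions `σ_k` (with `σ_{n+1} = 0`),
one has `(1/(n+2)) ∂_x τ_{n+2} = Σ_{i=1}^n ((-1)^{n-i}/i)(σ_1 σ_{n-i+1} - σ_{n-i+2}) ∂_x τ_i`. -/

lemma prod_sub_expand (n : ℕ) (l : Fin n → ℝ) (a : ℝ) :
    ∏ i, (a - l i) = ∑ k ∈ Finset.range (n + 1), (-1 : ℝ) ^ k * esymm n l k * a ^ (n - k) := by
  have h : ∀ i : Fin n, a - l i = (-l i) + a := by intro i; ring
  simp_rw [h]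
  rw [Finset.prod_add]
  rw [Finset.sum_powerset]
  simp only [Finset.card_univ, Fintype.card_fin]
  refine Finset.sum_congr rfl fun k hk => ?_
  rw [esymm, Finset.mul_sum, Finset.sum_mul]
  refine Finset.sum_congr rfl fun t ht => ?_
  have htc : t.card = k := (Finset.mem_powersetCard.mp ht).2
  have hneg : ∏ i ∈ t, (-l i) = (-1 : ℝ) ^ t.card * ∏ i ∈ t, l i := by
    rw [← Finset.prod_const, ← Finset.prod_mul_distrib]
    exact Finset.prod_congr rfl fun i _ => by ring
  rw [hneg, Finset.prod_const]
  have : (Finset.univ \ t).card = n - k := by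
    rw [Finset.card_sdiff_of_subset (Finset.subset_univ t), Finset.card_univ, Fintype.card_fin, htc]
  rw [this, htc]

lemma key (n : ℕ) (hn : 0 < n) (l : Fin n → ℝ) (a : ℝ) (ha : ∏ i, (a - l i) = 0) :
    a ^ (n + 1) = ∑ i ∈ Finset.Icc 1 n, (-1 : ℝ) ^ (n - i) *
      (esymm n l 1 * esymm n l (n - i + 1) - esymm n l (n - i + 2)) * a ^ (i - 1) := by
  set e := esymm n l with he
  have h0 : ∑ k ∈ Finset.range (n + 1), (-1 : ℝ) ^ k * e k * a ^ (n - k) = 0 := by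
    rw [← prod_sub_expand]; exact ha
  have he0 : e 0 = 1 := by simp [he, esymm]
  have hetop : e (n + 1) = 0 := by
    have : (Finset.univ : Finset (Fin n)).powersetCard (n + 1) = ∅ := by
      rw [Finset.powersetCard_eq_empty]
      simp
    simp [he, esymm, this]
  have hins : Finset.range (n + 1) = insert 0 (Finset.Icc 1 n) := by
    ext m; simp only [Finset.mem_range, Finset.mem_insert, Finset.mem_Icc]; omega
  have hA : ∑ k ∈ Finset.Icc 1 n, (-1 : ℝ) ^ (k - 1) * e k * a ^ (n - k) = a ^ n := by
    rw [hins, Finset.sum_insert (by simp)] at h0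
    simp only [pow_zero, he0, one_mul, Nat.sub_zero] at h0
    have hsum : ∑ k ∈ Finset.Icc 1 n, (-1 : ℝ) ^ (k - 1) * e k * a ^ (n - k)
        = ∑ k ∈ Finset.Icc 1 n, -((-1 : ℝ) ^ k * e k * a ^ (n - k)) := by
      refine Finset.sum_congr rfl fun k hk => ?_
      have h1k := (Finset.mem_Icc.mp hk).1
      obtain ⟨m, rfl⟩ : ∃ m, k = m + 1 := ⟨k - 1, by omega⟩
      simp [pow_succ]
    rw [hsum, Finset.sum_neg_distrib]
    linarith [h0]
  have h1 : ∑ k ∈ Finset.range (n + 1), (-1 : ℝ) ^ k * e k * a ^ (n + 1 - k) = 0 := by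
    have h := congrArg (fun z => z * a) h0
    simp only [Finset.sum_mul, zero_mul] at h
    rw [← h]
    refine Finset.sum_congr rfl fun k hk => ?_
    have hkn : k ≤ n := by have := Finset.mem_range.mp hk; omega
    have hnk : n + 1 - k = (n - k) + 1 := by omega
    rw [hnk, pow_succ]; ring
  have hB : ∑ k ∈ Finset.Icc 1 n, (-1 : ℝ) ^ (k - 1) * e (k + 1) * a ^ (n - k)
      = -a ^ (n + 1) + e 1 * a ^ n := by
    have hre : ∑ k ∈ Finset.Icc 1 n, (-1 : ℝ) ^ (k - 1) * e (k + 1) * a ^ (n - k)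
        = ∑ m ∈ Finset.Icc 2 (n + 1), (-1 : ℝ) ^ m * e m * a ^ (n + 1 - m) := by
      refine Finset.sum_nbij' (fun k => k + 1) (fun m => m - 1)
        (fun k hk => ?_) (fun m hm => ?_) (fun k hk => ?_) (fun m hm => ?_) (fun k hk => ?_)
      · have := Finset.mem_Icc.mp hk; rw [Finset.mem_Icc]; omega
      · have := Finset.mem_Icc.mp hm; rw [Finset.mem_Icc]; omega
      · omega
      · have := Finset.mem_Icc.mp hm; omega
      · have h1k := (Finset.mem_Icc.mp hk).1
        have hs : (-1 : ℝ) ^ (k + 1) = (-1 : ℝ) ^ (k - 1) := by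
          rw [show k + 1 = (k - 1) + 2 by omega, pow_add]; simp
        have hx : n + 1 - (k + 1) = n - k := by omega
        rw [hs, hx]
    have hsplit : Finset.Icc 2 (n + 1) = insert (n + 1) (Finset.Icc 2 n) := by
      ext m; simp only [Finset.mem_insert, Finset.mem_Icc]; omega
    have hins2 : Finset.range (n + 1) = insert 0 (insert 1 (Finset.Icc 2 n)) := by
      ext m; simp only [Finset.mem_range, Finset.mem_insert, Finset.mem_Icc]; omega
    rw [hins2, Finset.sum_insert (by simp), Finset.sum_insert (by simp)] at h1
    simp only [pow_zero, he0, one_mul, Nat.sub_zero, pow_one] at h1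
    rw [hre, hsplit, Finset.sum_insert (by simp), hetop]
    have hn1 : n + 1 - 1 = n := by omega
    rw [hn1] at h1
    simp only [mul_zero, zero_mul, zero_add]
    linarith [h1]
  have hre2 : ∑ i ∈ Finset.Icc 1 n, (-1 : ℝ) ^ (n - i) *
      (e 1 * e (n - i + 1) - e (n - i + 2)) * a ^ (i - 1)
      = ∑ k ∈ Finset.Icc 1 n, (-1 : ℝ) ^ (k - 1) * (e 1 * e k - e (k + 1)) * a ^ (n - k) := by
    refine Finset.sum_nbij' (fun i => n + 1 - i) (fun k => n + 1 - k)
      (fun i hi => ?_) (fun k hk => ?_) (fun i hi => ?_) (fun k hk => ?_) (fun i hi => ?_)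
    · have := Finset.mem_Icc.mp hi; rw [Finset.mem_Icc]; omega
    · have := Finset.mem_Icc.mp hk; rw [Finset.mem_Icc]; omega
    · have := Finset.mem_Icc.mp hi; omega
    · have := Finset.mem_Icc.mp hk; omega
    · have hmem := Finset.mem_Icc.mp hi
      have e1 : n - i = (n + 1 - i) - 1 := by omega
      have e2 : n - i + 1 = n + 1 - i := by omega
      have e3 : n - i + 2 = (n + 1 - i) + 1 := by omega
      have e4 : i - 1 = n - (n + 1 - i) := by omega
      rw [e3, e2, e1, e4]
  rw [hre2]
  have hexp : ∑ k ∈ Finset.Icc 1 n, (-1 : ℝ) ^ (k - 1) * (e 1 * e k - e (k + 1)) * a ^ (n - k)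
      = e 1 * (∑ k ∈ Finset.Icc 1 n, (-1 : ℝ) ^ (k - 1) * e k * a ^ (n - k))
        - ∑ k ∈ Finset.Icc 1 n, (-1 : ℝ) ^ (k - 1) * e (k + 1) * a ^ (n - k) := by
    rw [Finset.mul_sum, ← Finset.sum_sub_distrib]
    exact Finset.sum_congr rfl fun k hk => by ring
  rw [hexp, hA, hB]; ring

/-- For differentiable functions `λ_1(x), …, λ_n(x)` with power sums
`τ_k = Σ_j λ_j^k` and elementary symmetric functions `σ_k` (with `σ_{n+1} = 0`),
one has `(1/(n+2)) ∂_x τ_{n+2} = Σ_{i=1}^n ((-1)^{n-i}/i)(σ_1 σ_{n-i+1} - σ_{n-i+2}) ∂_x τ_i`. -/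
theorem deriv_powerSum_succ_succ (n : ℕ) (hn : 0 < n) (l : Fin n → ℝ → ℝ)
    (hl : ∀ j, Differentiable ℝ (l j)) (x : ℝ) :
    (1 / ((n : ℝ) + 2)) * deriv (fun y => ∑ j, l j y ^ (n + 2)) x =
      ∑ i ∈ Finset.Icc 1 n, ((-1 : ℝ) ^ (n - i) / (i : ℝ)) *
        (esymm n (fun j => l j x) 1 * esymm n (fun j => l j x) (n - i + 1) -
          esymm n (fun j => l j x) (n - i + 2)) * deriv (fun y => ∑ j, l j y ^ i) x := by
  have hd : ∀ k : ℕ, deriv (fun y => ∑ j, l j y ^ k) x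
      = ∑ j, (k : ℝ) * l j x ^ (k - 1) * deriv (l j) x := by
    intro k
    have : HasDerivAt (fun y => ∑ j, l j y ^ k)
        (∑ j, (k : ℝ) * l j x ^ (k - 1) * deriv (l j) x) x :=
      HasDerivAt.fun_sum fun j _ => ((hl j x).hasDerivAt.pow k)
    exact this.deriv
  simp only [hd]
  rw [Finset.mul_sum]
  simp_rw [Finset.mul_sum]
  rw [Finset.sum_comm]
  refine Finset.sum_congr rfl fun j _ => ?_
  have hkey := key n hn (fun i => l i x) (l j x)
    (Finset.prod_eq_zero (Finset.mem_univ j) (sub_self _))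
  have hLHS : 1 / ((n : ℝ) + 2) * (((n : ℕ) + 2 : ℕ) * l j x ^ (n + 2 - 1) * deriv (l j) x)
      = l j x ^ (n + 1) * deriv (l j) x := by
    have h2 : ((n : ℝ) + 2) ≠ 0 := by positivity
    push_cast
    field_simp
  rw [hLHS, hkey, Finset.sum_mul]
  refine Finset.sum_congr rfl fun i hi => ?_
  have h1i := (Finset.mem_Icc.mp hi).1
  have hi0 : (i : ℝ) ≠ 0 := by positivity
  field_simp
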